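/- Let α ∈ (0,1). (a) The function t ↦ |(ω(t)−c)(ω(t)−1/c)/ω(t)|, where ω(t) = α/c + R_α e^{it}, is strictly increasing on the interval (0, π) (equivalently, Re log((ζ−c)(ζ−1/c)/ζ) strictly decreases as ζ moves from left to right along the upper half of the circle |ζ − α/c| = R_α). (b) Let θ₁ ∈ (0, π) be determined by r₊ = 1/c + R₁e^{iθ₁}. Then the function t ↦ |ζ(t)/((ζ(t)−αc)(ζ(t)−α/c))|, where ζ(t) = 1/c + R₁e^{it}, is strictly increasing on the interval (0, θ₁) (equivalently, Re log(ζ/((ζ−αc)(ζ−α/c))) strictly decreases as ζ moves from left to right along the open arc of the circle |ζ − 1/c| = R₁ in the upper half-plane with Re ζ > Re r₊). -/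

import Mathlib

open Complex

noncomputable def cc (α : ℝ) : ℝ := Real.sqrt (α / (1 - α + α ^ 2))
noncomputable def Ra (α : ℝ) : ℝ := (1 - α) * Real.sqrt α
noncomputable def R1 (α : ℝ) : ℝ := (1 - α) / Real.sqrt α
noncomputable def rp (α : ℝ) : ℂ :=
  (cc α : ℂ) * ((1 + (α : ℂ)) / 2 + Complex.I * (Real.sqrt 3 : ℂ) * ((1 - (α : ℂ)) / 2))

/-- Parametrization of the circle `|ζ − 1/c| = R₁`. -/
noncomputable def zeta1 (α t : ℝ) : ℂ :=
  1 / (cc α : ℂ) + (R1 α : ℂ) * Complex.exp (Complex.I * (t : ℂ))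

/-- Parametrization of the circle `|ω − α/c| = R_α`. -/
noncomputable def omegaA (α t : ℝ) : ℂ :=
  (α : ℂ) / (cc α : ℂ) + (Ra α : ℂ) * Complex.exp (Complex.I * (t : ℂ))

lemma exp_I_mul (t : ℝ) : Complex.exp (Complex.I * t) =
    ((Real.cos t : ℝ) : ℂ) + ((Real.sin t : ℝ) : ℂ) * Complex.I := by
  rw [mul_comm, Complex.exp_mul_I, ← Complex.ofReal_cos, ← Complex.ofReal_sin]

lemma normSq_circle (A R t : ℝ) :
    Complex.normSq ((A : ℂ) + (R : ℂ) * Complex.exp (Complex.I * t)) =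
      A^2 + R^2 + 2*A*R*Real.cos t := by
  rw [exp_I_mul]
  simp [Complex.normSq_apply, Complex.cos_ofReal_re, Complex.sin_ofReal_re]
  nlinarith [Real.sin_sq_add_cos_sq t]

set_option maxHeartbeats 1600000 in
lemma gapA (s d a b : ℝ) (hs0 : 0 < s) (hs1 : s < 1) (hd0 : 0 < d)
    (hd2 : d^2 = 1 - s^2 + (s^2)^2) (ha : -1 < a) (hab : a < b) (hb : b ≤ 1) :
    (1-s^2)^4 * ((s^2)^2 + d^2 - 2*s^2*d*b)^2 /
        (d^2*(s^2*(d^2 + (1-s^2)^2 + 2*(1-s^2)*d*b)))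
    < (1-s^2)^4 * ((s^2)^2 + d^2 - 2*s^2*d*a)^2 /
        (d^2*(s^2*(d^2 + (1-s^2)^2 + 2*(1-s^2)*d*a))) := by
  have hs2 : 0 < 1 - s^2 := by nlinarith
  have hds : s^2 < d := lt_of_pow_lt_pow_left₀ 2 hd0.le (by nlinarith)
  have h1s : 1 - s^2 < d := lt_of_pow_lt_pow_left₀ 2 hd0.le (by nlinarith)
  have hUa : 0 < (s^2)^2 + d^2 - 2*s^2*d*a := by
    nlinarith [sq_nonneg (d - s^2), mul_pos (mul_pos (mul_pos hs0 hs0) hd0) (by linarith : (0:ℝ) < 1 - a)]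
  have hUb : 0 < (s^2)^2 + d^2 - 2*s^2*d*b := by
    nlinarith [mul_pos (sub_pos.2 hds) (sub_pos.2 hds),
      mul_nonneg (mul_nonneg (mul_nonneg hs0.le hs0.le) hd0.le) (by linarith : (0:ℝ) ≤ 1 - b)]
  have hVa : 0 < d^2 + (1-s^2)^2 + 2*(1-s^2)*d*a := by
    nlinarith [sq_nonneg (d - (1-s^2)), mul_pos (mul_pos hs2 hd0) (by linarith : (0:ℝ) < 1 + a)]
  have hVb : 0 < d^2 + (1-s^2)^2 + 2*(1-s^2)*d*b := by
    nlinarith [sq_nonneg (d - (1-s^2)), mul_pos (mul_pos hs2 hd0) (by linarith : (0:ℝ) < 1 + b)]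
  rw [div_lt_div_iff₀ (by positivity) (by positivity)]
  have key : ((s^2)^2 + d^2 - 2*s^2*d*a)^2 * (d^2 + (1-s^2)^2 + 2*(1-s^2)*d*b)
      - ((s^2)^2 + d^2 - 2*s^2*d*b)^2 * (d^2 + (1-s^2)^2 + 2*(1-s^2)*d*a)
      = (b-a)*(2*s^2*d*(((s^2)^2 + d^2 - 2*s^2*d*a)+((s^2)^2 + d^2 - 2*s^2*d*b))
            * (d^2 + (1-s^2)^2 + 2*(1-s^2)*d*b)
          + 2*(1-s^2)*d*((s^2)^2 + d^2 - 2*s^2*d*b)^2) := by ring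
  have hrhs : 0 < (b-a)*(2*s^2*d*(((s^2)^2 + d^2 - 2*s^2*d*a)+((s^2)^2 + d^2 - 2*s^2*d*b))
            * (d^2 + (1-s^2)^2 + 2*(1-s^2)*d*b)
          + 2*(1-s^2)*d*((s^2)^2 + d^2 - 2*s^2*d*b)^2) := by
    apply mul_pos (by linarith)
    have h1 : 0 < 2*s^2*d*(((s^2)^2 + d^2 - 2*s^2*d*a)+((s^2)^2 + d^2 - 2*s^2*d*b))
            * (d^2 + (1-s^2)^2 + 2*(1-s^2)*d*b) := by positivity
    have h2 : 0 < 2*(1-s^2)*d*((s^2)^2 + d^2 - 2*s^2*d*b)^2 := by positivity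
    linarith
  have hdiff : 0 < ((s^2)^2 + d^2 - 2*s^2*d*a)^2 * (d^2 + (1-s^2)^2 + 2*(1-s^2)*d*b)
      - ((s^2)^2 + d^2 - 2*s^2*d*b)^2 * (d^2 + (1-s^2)^2 + 2*(1-s^2)*d*a) := by
    rw [key]; exact hrhs
  nlinarith [mul_pos (show (0:ℝ) < (1-s^2)^4*d^2*s^2 by positivity) hdiff]

set_option maxHeartbeats 1600000 in
lemma gapB (s d a b : ℝ) (hs0 : 0 < s) (hs1 : s < 1) (hd0 : 0 < d)
    (hd2 : d^2 = 1 - s^2 + (s^2)^2) (hxa : -(2-s^2) ≤ 2*d*a) (hab : a < b) (hb : b ≤ 1) :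
    s^2*d^2*(d^2 + (1-s^2)^2 + 2*(1-s^2)*d*b) / ((1-s^2)^4*(1 + d^2 + 2*d*b)^2)
    < s^2*d^2*(d^2 + (1-s^2)^2 + 2*(1-s^2)*d*a) / ((1-s^2)^4*(1 + d^2 + 2*d*a)^2) := by
  have hs2 : 0 < 1 - s^2 := by nlinarith
  have h2d : 2 - s^2 < 2*d := by
    have hfac : (2*d - (2-s^2)) * (2*d + (2-s^2)) = 3*s^4 := by linear_combination 4*hd2
    have hsum : 0 < 2*d + (2-s^2) := by nlinarith
    nlinarith [pow_pos hs0 4]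
  have ha1 : -1 < a := by
    by_contra h
    push_neg at h
    have := mul_le_mul_of_nonneg_left h (by linarith : (0:ℝ) ≤ 2*d)
    nlinarith
  have hVa : 0 < d^2 + (1-s^2)^2 + 2*(1-s^2)*d*a := by
    nlinarith [sq_nonneg (d - (1-s^2)), mul_pos (mul_pos hs2 hd0) (by linarith : (0:ℝ) < 1 + a)]
  have hVb : 0 < d^2 + (1-s^2)^2 + 2*(1-s^2)*d*b := by
    nlinarith [sq_nonneg (d - (1-s^2)), mul_pos (mul_pos hs2 hd0) (by linarith : (0:ℝ) < 1 + b)]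
  have hWa : 0 < 1 + d^2 + 2*d*a := by nlinarith [pow_pos hs0 4]
  have hWb : 0 < 1 + d^2 + 2*d*b := by
    have : 2*d*a < 2*d*b := by
      have := mul_lt_mul_of_pos_left hab (show (0:ℝ) < 2*d by linarith)
      linarith [this]
    linarith
  have hkey : (1-s^2)*(1 + d^2 + 2*d*a) < 2*(d^2 + (1-s^2)^2 + 2*(1-s^2)*d*a) := by
    nlinarith [mul_le_mul_of_nonneg_left hxa hs2.le]
  have hWab : 1 + d^2 + 2*d*a < 1 + d^2 + 2*d*b := by
    have := mul_lt_mul_of_pos_left hab (show (0:ℝ) < 2*d by linarith)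
    linarith
  have hbr : (1-s^2)*(1 + d^2 + 2*d*a)^2
      < (d^2 + (1-s^2)^2 + 2*(1-s^2)*d*a) * ((1 + d^2 + 2*d*b) + (1 + d^2 + 2*d*a)) := by
    nlinarith [mul_lt_mul_of_pos_right hkey hWa, mul_pos hVa (sub_pos.2 hWab)]
  have key : (d^2 + (1-s^2)^2 + 2*(1-s^2)*d*b)*(1 + d^2 + 2*d*a)^2
      - (d^2 + (1-s^2)^2 + 2*(1-s^2)*d*a)*(1 + d^2 + 2*d*b)^2
      = (b-a)*2*d*((1-s^2)*(1 + d^2 + 2*d*a)^2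
        - (d^2 + (1-s^2)^2 + 2*(1-s^2)*d*a)*((1 + d^2 + 2*d*b) + (1 + d^2 + 2*d*a))) := by
    ring
  have hdiff : 0 < (d^2 + (1-s^2)^2 + 2*(1-s^2)*d*a)*(1 + d^2 + 2*d*b)^2
      - (d^2 + (1-s^2)^2 + 2*(1-s^2)*d*b)*(1 + d^2 + 2*d*a)^2 := by
    nlinarith [key, mul_pos (mul_pos (sub_pos.2 hab) (show (0:ℝ) < 2*d by linarith))
      (sub_pos.2 hbr)]
  rw [div_lt_div_iff₀ (by positivity) (by positivity)]
  nlinarith [mul_pos (show (0:ℝ) < s^2*d^2*(1-s^2)^4 by positivity) hdiff]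

lemma cosval (s d y : ℝ) (hs : s ≠ 0) (hd : d ≠ 0) (hd2 : d^2 = 1 - s^2 + (s^2)^2)
    (h : (s/d)*(1+s^2)/2 = d/s + (1-s^2)/s * y) (hs1 : s^2 < 1) :
    y = -(2-s^2)/(2*d) := by
  field_simp at h
  have h2 : y*(2*d)*(1-s^2) = (s^2-2)*(1-s^2) := by linear_combination -h-2*hd2
  have h3 : y*(2*d) = s^2-2 := mul_right_cancel₀ (by nlinarith) h2
  field_simp
  linarith

set_option maxHeartbeats 2000000 in
/-- Strict monotonicity of `|(ω−c)(ω−1/c)/ω|` on the upper half of the circle `γ_α`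
and of `|ζ/((ζ−αc)(ζ−α/c))|` on the arc of `γ₁` between the angles `0` and `θ₁`,
where `r₊ = 1/c + R₁ e^{iθ₁}`. -/
theorem strict_mono_abs_on_circles (α : ℝ) (hα0 : 0 < α) (hα1 : α < 1)
    (θ₁ : ℝ) (hθ₁0 : 0 < θ₁) (hθ₁π : θ₁ < Real.pi)
    (hθ₁ : rp α = 1 / (cc α : ℂ) + (R1 α : ℂ) * Complex.exp (Complex.I * (θ₁ : ℂ))) :
    StrictMonoOn (fun t : ℝ =>
        ‖(omegaA α t - (cc α : ℂ)) * (omegaA α t - 1 / (cc α : ℂ)) / omegaA α t‖)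
      (Set.Ioo 0 Real.pi) ∧
    StrictMonoOn (fun t : ℝ =>
        ‖zeta1 α t /
          ((zeta1 α t - (α : ℂ) * (cc α : ℂ)) * (zeta1 α t - (α : ℂ) / (cc α : ℂ)))‖)
      (Set.Ioo 0 θ₁) := by
  obtain ⟨s, hs0, rfl⟩ : ∃ s, 0 < s ∧ s ^ 2 = α :=
    ⟨Real.sqrt α, Real.sqrt_pos.2 hα0, Real.sq_sqrt hα0.le⟩
  have hs1 : s < 1 := by nlinarith
  have hD : 0 < 1 - s^2 + (s^2)^2 := by nlinarith
  obtain ⟨d, hd0, hd2⟩ : ∃ d, 0 < d ∧ d ^ 2 = 1 - s^2 + (s^2)^2 :=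
    ⟨Real.sqrt _, Real.sqrt_pos.2 hD, Real.sq_sqrt hD.le⟩
  have hsne : s ≠ 0 := hs0.ne'
  have hdne : d ≠ 0 := hd0.ne'
  have hs2 : (0:ℝ) < 1 - s^2 := by nlinarith
  have hcc : cc (s^2) = s / d := by
    rw [cc, show s^2/(1 - s^2 + (s^2)^2) = (s/d)^2 by rw [div_pow, hd2],
      Real.sqrt_sq (by positivity)]
  have hRa : Ra (s^2) = (1-s^2)*s := by rw [Ra, Real.sqrt_sq hs0.le]
  have hR1 : R1 (s^2) = (1-s^2)/s := by rw [R1, Real.sqrt_sq hs0.le]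
  -- the value of cos θ₁
  have hrp : rp (s^2) = ((cc (s^2)*(1+s^2)/2 : ℝ) : ℂ) +
      ((cc (s^2)*Real.sqrt 3*(1-s^2)/2 : ℝ):ℂ) * Complex.I := by
    rw [rp]; push_cast; ring
  have h2 : ((cc (s^2)*(1+s^2)/2 : ℝ) : ℂ) + ((cc (s^2)*Real.sqrt 3*(1-s^2)/2 : ℝ):ℂ) * Complex.I
      = ((1/(cc (s^2)) + R1 (s^2) * Real.cos θ₁ : ℝ):ℂ) +
        ((R1 (s^2) * Real.sin θ₁ : ℝ):ℂ) * Complex.I := by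
    rw [← hrp, hθ₁, exp_I_mul]; push_cast; ring
  have hre : cc (s^2)*(1+s^2)/2 = (cc (s^2))⁻¹ + R1 (s^2) * Real.cos θ₁ := by
    simpa [← Complex.ofReal_pow, Complex.cos_ofReal_re] using congrArg Complex.re h2
  have hre' : (s/d)*(1+s^2)/2 = d/s + (1-s^2)/s * Real.cos θ₁ := by
    rw [hcc, hR1, inv_div] at hre; exact hre
  have hcosθ : Real.cos θ₁ = -(2-s^2)/(2*d) := cosval s d _ hsne hdne hd2 hre' (by nlinarith)
  constructor
  · -- part (a)
    have ea1 : ∀ t : ℝ, Complex.normSq (omegaA (s^2) t - (cc (s^2):ℂ)) =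
        (1-s^2)^2*s^2/d^2 * ((s^2)^2 + d^2 - 2*s^2*d*Real.cos t) := by
      intro t
      have e : omegaA (s^2) t - (cc (s^2):ℂ) = ((s^2/(s/d) - s/d : ℝ) : ℂ) +
          (((1-s^2)*s : ℝ) : ℂ) * Complex.exp (Complex.I * t) := by
        rw [omegaA, hcc, hRa]; push_cast; ring
      rw [e, normSq_circle]
      field_simp
      linear_combination (d^2-1-s^2+s^4 + 2*d*Real.cos t*(1-s^2)) * hd2
    have ea2 : ∀ t : ℝ, Complex.normSq (omegaA (s^2) t - 1/(cc (s^2):ℂ)) =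
        (1-s^2)^2/s^2 * ((s^2)^2 + d^2 - 2*s^2*d*Real.cos t) := by
      intro t
      have e : omegaA (s^2) t - 1/(cc (s^2):ℂ) = ((s^2/(s/d) - 1/(s/d) : ℝ) : ℂ) +
          (((1-s^2)*s : ℝ) : ℂ) * Complex.exp (Complex.I * t) := by
        rw [omegaA, hcc, hRa]; push_cast; ring
      rw [e, normSq_circle]
      field_simp
      ring_nf
    have ea3 : ∀ t : ℝ, Complex.normSq (omegaA (s^2) t) =
        s^2 * (d^2 + (1-s^2)^2 + 2*(1-s^2)*d*Real.cos t) := by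
      intro t
      have e : omegaA (s^2) t = ((s^2/(s/d) : ℝ) : ℂ) +
          (((1-s^2)*s : ℝ) : ℂ) * Complex.exp (Complex.I * t) := by
        rw [omegaA, hcc, hRa]; push_cast; ring
      rw [e, normSq_circle]
      field_simp
    have hNa : ∀ t : ℝ, -1 < Real.cos t →
        Complex.normSq ((omegaA (s^2) t - (cc (s^2):ℂ)) * (omegaA (s^2) t - 1/(cc (s^2):ℂ)) /
          omegaA (s^2) t) =
        (1-s^2)^4 * ((s^2)^2 + d^2 - 2*s^2*d*Real.cos t)^2 /
          (d^2*(s^2*(d^2 + (1-s^2)^2 + 2*(1-s^2)*d*Real.cos t))) := by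
      intro t hx
      have hV : 0 < d^2 + (1-s^2)^2 + 2*(1-s^2)*d*Real.cos t := by
        nlinarith [sq_nonneg (d - (1-s^2)),
          mul_pos (mul_pos hs2 hd0) (by linarith : (0:ℝ) < 1 + Real.cos t)]
      rw [map_div₀, map_mul, ea1 t, ea2 t, ea3 t]
      field_simp
    intro t₁ h₁ t₂ h₂ h12
    have hm := Real.strictAntiOn_cos
    have hmem₁ : t₁ ∈ Set.Icc 0 Real.pi := ⟨h₁.1.le, h₁.2.le⟩
    have hmem₂ : t₂ ∈ Set.Icc 0 Real.pi := ⟨h₂.1.le, h₂.2.le⟩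
    have hc2 : Real.cos t₂ < Real.cos t₁ := hm hmem₁ hmem₂ h12
    have hcb1 : Real.cos t₁ < 1 := by
      have := hm (Set.left_mem_Icc.2 Real.pi_pos.le) hmem₁ h₁.1
      rwa [Real.cos_zero] at this
    have hca : -1 < Real.cos t₂ := by
      have := hm hmem₂ (Set.right_mem_Icc.2 Real.pi_pos.le) h₂.2
      rwa [Real.cos_pi] at this
    simp only
    rw [Complex.norm_def, Complex.norm_def]
    refine Real.sqrt_lt_sqrt (Complex.normSq_nonneg _) ?_
    rw [hNa t₁ (by linarith), hNa t₂ hca]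
    exact gapA s d (Real.cos t₂) (Real.cos t₁) hs0 hs1 hd0 hd2 hca hc2 hcb1.le
  · -- part (b)
    have eb1 : ∀ t : ℝ, Complex.normSq (zeta1 (s^2) t) =
        (d^2 + (1-s^2)^2 + 2*(1-s^2)*d*Real.cos t) / s^2 := by
      intro t
      have e : zeta1 (s^2) t = ((1/(s/d) : ℝ) : ℂ) +
          (((1-s^2)/s : ℝ) : ℂ) * Complex.exp (Complex.I * t) := by
        rw [zeta1, hcc, hR1]; push_cast; ring
      rw [e, normSq_circle]
      field_simp
    have eb2 : ∀ t : ℝ, Complex.normSq (zeta1 (s^2) t - ((s^2:ℝ):ℂ) * (cc (s^2):ℂ)) =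
        (1-s^2)^2/(s^2*d^2) * (1 + d^2 + 2*d*Real.cos t) := by
      intro t
      have e : zeta1 (s^2) t - ((s^2:ℝ):ℂ) * (cc (s^2):ℂ) =
          ((1/(s/d) - s^2*(s/d) : ℝ) : ℂ) +
          (((1-s^2)/s : ℝ) : ℂ) * Complex.exp (Complex.I * t) := by
        rw [zeta1, hcc, hR1]; push_cast; ring
      rw [e, normSq_circle]
      field_simp
      linear_combination (d^2-s^4+1-s^2 + 2*d*Real.cos t*(1-s^2)) * hd2
    have eb3 : ∀ t : ℝ, Complex.normSq (zeta1 (s^2) t - ((s^2:ℝ):ℂ) / (cc (s^2):ℂ)) =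
        (1-s^2)^2/s^2 * (1 + d^2 + 2*d*Real.cos t) := by
      intro t
      have e : zeta1 (s^2) t - ((s^2:ℝ):ℂ) / (cc (s^2):ℂ) =
          ((1/(s/d) - s^2/(s/d) : ℝ) : ℂ) +
          (((1-s^2)/s : ℝ) : ℂ) * Complex.exp (Complex.I * t) := by
        rw [zeta1, hcc, hR1]; push_cast; ring
      rw [e, normSq_circle]
      field_simp
      ring_nf
    have hNb : ∀ t : ℝ, -(2-s^2) ≤ 2*d*Real.cos t →
        Complex.normSq (zeta1 (s^2) t /
          ((zeta1 (s^2) t - ((s^2:ℝ):ℂ) * (cc (s^2):ℂ)) *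
            (zeta1 (s^2) t - ((s^2:ℝ):ℂ) / (cc (s^2):ℂ)))) =
        s^2*d^2*(d^2 + (1-s^2)^2 + 2*(1-s^2)*d*Real.cos t) /
          ((1-s^2)^4*(1 + d^2 + 2*d*Real.cos t)^2) := by
      intro t hx
      have hW : 0 < 1 + d^2 + 2*d*Real.cos t := by nlinarith [pow_pos hs0 4]
      have h2d : 2 - s^2 < 2*d := by
        have hfac : (2*d - (2-s^2)) * (2*d + (2-s^2)) = 3*s^4 := by linear_combination 4*hd2
        have hsum : 0 < 2*d + (2-s^2) := by nlinarith
        nlinarith [pow_pos hs0 4]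
      have ha1 : -1 < Real.cos t := by
        by_contra h
        push_neg at h
        have := mul_le_mul_of_nonneg_left h (by linarith : (0:ℝ) ≤ 2*d)
        nlinarith
      have hV : 0 < d^2 + (1-s^2)^2 + 2*(1-s^2)*d*Real.cos t := by
        nlinarith [sq_nonneg (d - (1-s^2)),
          mul_pos (mul_pos hs2 hd0) (by linarith : (0:ℝ) < 1 + Real.cos t)]
      rw [map_div₀, map_mul, eb1 t, eb2 t, eb3 t]
      field_simp
    intro t₁ h₁ t₂ h₂ h12
    have hm := Real.strictAntiOn_cos
    have hmem₁ : t₁ ∈ Set.Icc 0 Real.pi := ⟨h₁.1.le, by linarith [h₁.2]⟩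
    have hmem₂ : t₂ ∈ Set.Icc 0 Real.pi := ⟨h₂.1.le, by linarith [h₂.2]⟩
    have hmemθ : θ₁ ∈ Set.Icc 0 Real.pi := ⟨hθ₁0.le, hθ₁π.le⟩
    have hc2 : Real.cos t₂ < Real.cos t₁ := hm hmem₁ hmem₂ h12
    have hcθ2 : Real.cos θ₁ < Real.cos t₂ := hm hmem₂ hmemθ h₂.2
    have hxa : -(2-s^2) ≤ 2*d*Real.cos t₂ := by
      have h1 : 2*d*Real.cos θ₁ = -(2-s^2) := by
        rw [hcosθ]; field_simp
      have := mul_lt_mul_of_pos_left hcθ2 (show (0:ℝ) < 2*d by linarith)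
      linarith
    have hxb : -(2-s^2) ≤ 2*d*Real.cos t₁ := by
      have := mul_lt_mul_of_pos_left hc2 (show (0:ℝ) < 2*d by linarith)
      linarith
    simp only
    rw [Complex.norm_def, Complex.norm_def]
    refine Real.sqrt_lt_sqrt (Complex.normSq_nonneg _) ?_
    rw [hNb t₁ hxb, hNb t₂ hxa]
    exact gapB s d (Real.cos t₂) (Real.cos t₁) hs0 hs1 hd0 hd2 hxa hc2 (Real.cos_le_one t₁)
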